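/- Let V, g, φ, ξ, η, A, D be as in the context. If g(AX, Y) = 0 for all X, Y ∈ D (the pointwise ruled condition), then A_F(φX, Y) = φ(A_F(X, Y)) for all X, Y ∈ D. (Converse direction of Theorem 3.) -/

import Mathlib

open scoped InnerProductSpace

/-- The Cho operator `F_X` for `X` in the maximal holomorphic distribution `D`
(for such `X` the `k`-th Cho operator `F^{(k)}_X Y = g(φ(AX),Y)ξ − η(Y)φ(AX) − k·η(X)·φY`
does not depend on `k`): `F_X Y = g(φ(AX), Y)·ξ − η(Y)·φ(AX)`. -/
noncomputable def choF {V : Type*} [NormedAddCommGroup V] [InnerProductSpace ℝ V]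
    (φ A : V →ₗ[ℝ] V) (ξ : V) (X Y : V) : V :=
  ⟪φ (A X), Y⟫_ℝ • ξ - ⟪Y, ξ⟫_ℝ • φ (A X)

/-- `A_F(X, Y) = F_X (A Y) − A (F_X Y)` for `X ∈ D`. -/
noncomputable def AF {V : Type*} [NormedAddCommGroup V] [InnerProductSpace ℝ V]
    (φ A : V →ₗ[ℝ] V) (ξ : V) (X Y : V) : V :=
  choF φ A ξ X (A Y) - A (choF φ A ξ X Y)

theorem thm3_converse {V : Type*} [NormedAddCommGroup V] [InnerProductSpace ℝ V]
    [FiniteDimensional ℝ V] (hdim : 5 ≤ Module.finrank ℝ V)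
    (φ : V →ₗ[ℝ] V) (ξ : V) (hξ : ‖ξ‖ = 1)
    (hφφ : ∀ X : V, φ (φ X) = -X + ⟪X, ξ⟫_ℝ • ξ)
    (hφg : ∀ X Y : V, ⟪φ X, φ Y⟫_ℝ = ⟪X, Y⟫_ℝ - ⟪X, ξ⟫_ℝ * ⟪Y, ξ⟫_ℝ)
    (A : V →ₗ[ℝ] V) (hA : ∀ X Y : V, ⟪A X, Y⟫_ℝ = ⟪X, A Y⟫_ℝ)
    (hruled : ∀ X Y : V, ⟪X, ξ⟫_ℝ = 0 → ⟪Y, ξ⟫_ℝ = 0 → ⟪A X, Y⟫_ℝ = 0) :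
    ∀ X Y : V, ⟪X, ξ⟫_ℝ = 0 → ⟪Y, ξ⟫_ℝ = 0 →
      AF φ A ξ (φ X) Y = φ (AF φ A ξ X Y) := by
  have hξ2 : ⟪ξ, ξ⟫_ℝ = (1:ℝ) := by
    rw [real_inner_self_eq_norm_sq, hξ]; norm_num
  have hξne : ξ ≠ 0 := by
    intro h; rw [h, norm_zero] at hξ; norm_num at hξ
  -- φ ξ = 0
  have hφξ : φ ξ = 0 := by
    have h := hφg ξ ξ
    rw [hξ2] at h
    have h0 : ⟪φ ξ, φ ξ⟫_ℝ = 0 := by linarith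
    exact inner_self_eq_zero.mp h0
  -- η (φ X) = 0
  have hηφ : ∀ X : V, ⟪φ X, ξ⟫_ℝ = 0 := by
    intro X
    have h1 : φ (φ (φ X)) = -φ X + ⟪φ X, ξ⟫_ℝ • ξ := hφφ (φ X)
    have h2 : φ (φ (φ X)) = -φ X := by
      rw [hφφ X]
      simp [hφξ]
    rw [h2] at h1
    have h3 : ⟪φ X, ξ⟫_ℝ • ξ = 0 := add_eq_left.mp h1.symm
    rcases smul_eq_zero.mp h3 with h | h
    · exact h
    · exact absurd h hξne
  -- for X ∈ D, A X is proportional to ξ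
  have hAD : ∀ X : V, ⟪X, ξ⟫_ℝ = 0 → A X = ⟪A X, ξ⟫_ℝ • ξ := by
    intro X hX
    have key : ∀ Z : V, ⟪A X - ⟪A X, ξ⟫_ℝ • ξ, Z⟫_ℝ = 0 := by
      intro Z
      have hZD : ⟪Z - ⟪Z, ξ⟫_ℝ • ξ, ξ⟫_ℝ = 0 := by
        simp [inner_sub_left, inner_smul_left, hξ2, hξ]
      have h0 := hruled X _ hX hZD
      rw [inner_sub_right, inner_smul_right] at h0
      rw [inner_sub_left, real_inner_smul_left]
      have hcomm : ⟪ξ, Z⟫_ℝ = ⟪Z, ξ⟫_ℝ := real_inner_comm Z ξ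
      rw [hcomm]
      linarith
    have := key (A X - ⟪A X, ξ⟫_ℝ • ξ)
    have h0 := inner_self_eq_zero.mp this
    exact sub_eq_zero.mp h0
  -- hence φ (A X) = 0 for X ∈ D
  have hφA : ∀ X : V, ⟪X, ξ⟫_ℝ = 0 → φ (A X) = 0 := by
    intro X hX
    rw [hAD X hX, map_smul, hφξ, smul_zero]
  -- AF vanishes on D
  have hAF : ∀ X Y : V, ⟪X, ξ⟫_ℝ = 0 → AF φ A ξ X Y = 0 := by
    intro X Y hX
    simp [AF, choF, hφA X hX]
  intro X Y hX hY
  rw [hAF X Y hX, hAF (φ X) Y (hηφ X), map_zero]
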